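/- If a* > 0 and b ≥ 0 satisfy the first-order condition ψ(a*,b) = 0, i.e. −a*·k·(q + q·μ_α·θ(b)) + c·γ(b) + λk·(e^{−μ_α a*} − 1)/μ_α = 0, then J(a*,b) = k·a*. -/

import Mathlib

theorem stmt12 (c α lam q μ k : ℝ)
    (hc : 0 < c) (hα0 : 0 < α) (hα1 : α ≤ 1)
    (hlam : 0 < lam) (hq : 0 < q) (hμ : 0 < μ) (hk : 1 ≤ k)
    (Δ Φ ρ : ℝ)
    (hΔ : Δ = (c*μ - α*lam - α*q)^2 + 4*α*c*μ*q)
    (hΦ : Φ = (-(c*μ - α*lam - α*q) + Real.sqrt Δ) / (2*α*c))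
    (hρ : ρ = (-(c*μ - α*lam - α*q) - Real.sqrt Δ) / (2*α*c))
    (hΦpos : 0 < Φ) (hρneg : ρ < 0)
    (γ θf m : ℝ → ℝ) (D J ψ : ℝ → ℝ → ℝ)
    (hγ : ∀ b, γ b = (Φ - ρ)/(Φ*Real.exp (Φ*b) - ρ*Real.exp (ρ*b)))
    (hθf : ∀ b, θf b = (Real.exp (Φ*b) - Real.exp (ρ*b))/(Φ*Real.exp (Φ*b) - ρ*Real.exp (ρ*b)))
    (hm : ∀ a, m a = (1 - Real.exp (-(μ/α)*a)*((μ/α)*a + 1))/(μ/α))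
    (hD : ∀ a b, D a b = q + (μ/α)*q*θf b + lam*Real.exp (-(μ/α)*a))
    (hJ : ∀ a b, J a b = (c*γ b - lam*k*m a)/(D a b))
    (hψ : ∀ a b, ψ a b = -(a*k*(q + q*(μ/α)*θf b)) + c*γ b + lam*k*(Real.exp (-(μ/α)*a) - 1)/(μ/α)) :
    ∀ astar b : ℝ, 0 < astar → 0 ≤ b →
      -(astar*k*(q + q*(μ/α)*θf b)) + c*γ b + lam*k*(Real.exp (-(μ/α)*astar) - 1)/(μ/α) = 0 →
      J astar b = k * astar := by
  intro astar b ha hb hfoc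
  have hμα : 0 < μ/α := div_pos hμ hα0
  have hθ : 0 ≤ θf b := by
    rw [hθf]
    apply div_nonneg
    · have : ρ * b ≤ Φ * b := by nlinarith
      simpa using Real.exp_le_exp.mpr this
    · have h1 : 0 < Φ * Real.exp (Φ*b) := mul_pos hΦpos (Real.exp_pos _)
      have h2 : ρ * Real.exp (ρ*b) < 0 := mul_neg_of_neg_of_pos hρneg (Real.exp_pos _)
      linarith
  have hE : 0 < Real.exp (-(μ/α)*astar) := Real.exp_pos _
  have hDpos : 0 < D astar b := by
    rw [hD]
    have := mul_nonneg (mul_nonneg hμα.le hq.le) hθ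
    nlinarith [mul_pos hlam hE]
  have hkey : c*γ b - lam*k*m astar = k*astar*(D astar b) := by
    rw [hm, hD]
    field_simp
    field_simp at hfoc
    rw [show astar * μ = μ * astar from mul_comm _ _] at hfoc
    linear_combination hfoc
  rw [hJ, hkey]
  field_simp
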